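/- Let M = U × V carry the product metric g (warping function f ≡ 1), and suppose g is super generalized recurrent (SGK_n) with associated 1-forms (Π, Φ, Ψ, Θ). Then: (i) both ḡ and g̃ are super generalized recurrent (each satisfies the SGK identity with suitable associated 1-forms); (ii) at every point where the fiber part of Π is nonzero (Π_ε ≠ 0 for some ε), ḡ is of Roter type RT_p with (R̄; ḡ, S̄), i.e. R̄ = N₁ ḡ∧ḡ − N₂ ḡ∧S̄ − N₃ S̄∧S̄ there for some reals N₁,N₂,N₃; (iii) at every point where the base part of Π is nonzero (Π_e ≠ 0 for some e), g̃ is of Roter type RT_{n−p} with (R̃; g̃, S̃); (iv) at every point where 2κ̃Φ_ε + (n−p)Ψ_ε ≠ 0 for some ε, the base satisfies the Einstein metric condition S̄_{ab} = λ ḡ_{ab} for some real λ; (v) at every point where 2κ̄Φ_e + pΨ_e ≠ 0 for some e, the fiber satisfies the Einstein metric condition S̃_{αβ} = μ g̃_{αβ} for some real μ. -/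

import Mathlib

noncomputable section

/-- Partial derivative of a scalar function along the `j`-th coordinate direction. -/
def pd {k : ℕ} (F : (Fin k → ℝ) → ℝ) (j : Fin k) (x : Fin k → ℝ) : ℝ :=
  fderiv ℝ F x (Pi.single j 1)

/-- Christoffel symbols `Γ^i_{jl}` of a metric `h` with (pointwise) inverse `hinv`. -/
def Christoffel {k : ℕ} (h hinv : (Fin k → ℝ) → Fin k → Fin k → ℝ)
    (i j l : Fin k) (x : Fin k → ℝ) : ℝ :=
  (1 / 2) * ∑ r, hinv x i r *
    (pd (fun y => h y r l) j x + pd (fun y => h y j r) l x - pd (fun y => h y j l) r x)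

/-- The (0,4) Riemann-Christoffel curvature tensor of `h`. -/
def Riem {k : ℕ} (h hinv : (Fin k → ℝ) → Fin k → Fin k → ℝ)
    (x : Fin k → ℝ) (i j s l : Fin k) : ℝ :=
  ∑ r, h x i r *
    (pd (Christoffel h hinv r l j) s x - pd (Christoffel h hinv r s j) l x
      + (∑ t, Christoffel h hinv r s t x * Christoffel h hinv t l j x)
      - ∑ t, Christoffel h hinv r l t x * Christoffel h hinv t s j x)

/-- The Ricci tensor of `h`. -/
def Ric {k : ℕ} (h hinv : (Fin k → ℝ) → Fin k → Fin k → ℝ)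
    (x : Fin k → ℝ) (j l : Fin k) : ℝ :=
  ∑ i, ∑ s, hinv x i s * Riem h hinv x i j s l

/-- The scalar curvature of `h`. -/
def Scal {k : ℕ} (h hinv : (Fin k → ℝ) → Fin k → Fin k → ℝ) (x : Fin k → ℝ) : ℝ :=
  ∑ j, ∑ l, hinv x j l * Ric h hinv x j l

/-- Covariant derivative (w.r.t. the Levi-Civita connection of `h`) of a (0,4) tensor field. -/
def cov4 {k : ℕ} (h hinv : (Fin k → ℝ) → Fin k → Fin k → ℝ)
    (T : (Fin k → ℝ) → Fin k → Fin k → Fin k → Fin k → ℝ)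
    (x : Fin k → ℝ) (i j s l m : Fin k) : ℝ :=
  pd (fun y => T y i j s l) m x
    - (∑ r, Christoffel h hinv r m i x * T x r j s l)
    - (∑ r, Christoffel h hinv r m j x * T x i r s l)
    - (∑ r, Christoffel h hinv r m s x * T x i j r l)
    - ∑ r, Christoffel h hinv r m l x * T x i j s r

/-- Covariant derivative of a (0,2) tensor field. -/
def cov2 {k : ℕ} (h hinv : (Fin k → ℝ) → Fin k → Fin k → ℝ)
    (T : (Fin k → ℝ) → Fin k → Fin k → ℝ) (x : Fin k → ℝ) (i j m : Fin k) : ℝ :=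
  pd (fun y => T y i j) m x
    - (∑ r, Christoffel h hinv r m i x * T x r j)
    - ∑ r, Christoffel h hinv r m j x * T x i r

/-- Kulkarni-Nomizu product of two (0,2) tensors. -/
def KN {k : ℕ} (A E : (Fin k → ℝ) → Fin k → Fin k → ℝ)
    (x : Fin k → ℝ) (i j s l : Fin k) : ℝ :=
  A x i l * E x j s + A x j s * E x i l - A x i s * E x j l - A x j l * E x i s

/-- The Gaussian curvature tensor `G_{ijsl} = h_{il}h_{js} - h_{is}h_{jl}`. -/
def Gt {k : ℕ} (h : (Fin k → ℝ) → Fin k → Fin k → ℝ)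
    (x : Fin k → ℝ) (i j s l : Fin k) : ℝ :=
  h x i l * h x j s - h x i s * h x j l

/-- The conformal (Weyl) curvature tensor of a `k`-dimensional metric `h`. -/
def Weyl {k : ℕ} (h hinv : (Fin k → ℝ) → Fin k → Fin k → ℝ)
    (x : Fin k → ℝ) (i j s l : Fin k) : ℝ :=
  Riem h hinv x i j s l - (1 / ((k : ℝ) - 2)) * KN h (Ric h hinv) x i j s l
    + (Scal h hinv x / (2 * ((k : ℝ) - 1) * ((k : ℝ) - 2))) * KN h h x i j s l

/-- Recurrency condition at a point. -/
def Recur {k : ℕ} (h hinv : (Fin k → ℝ) → Fin k → Fin k → ℝ)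
    (piF : (Fin k → ℝ) → Fin k → ℝ) (x : Fin k → ℝ) : Prop :=
  ∀ i j s l m, cov4 h hinv (Riem h hinv) x i j s l m = piF x m * Riem h hinv x i j s l

/-- Hyper generalized recurrency condition at a point. -/
def HGK {k : ℕ} (h hinv : (Fin k → ℝ) → Fin k → Fin k → ℝ)
    (piF psiF : (Fin k → ℝ) → Fin k → ℝ) (x : Fin k → ℝ) : Prop :=
  ∀ i j s l m, cov4 h hinv (Riem h hinv) x i j s l m =
    piF x m * Riem h hinv x i j s l + psiF x m * KN h (Ric h hinv) x i j s l

/-- Weakly generalized recurrency condition at a point. -/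
def WGK {k : ℕ} (h hinv : (Fin k → ℝ) → Fin k → Fin k → ℝ)
    (piF phiF : (Fin k → ℝ) → Fin k → ℝ) (x : Fin k → ℝ) : Prop :=
  ∀ i j s l m, cov4 h hinv (Riem h hinv) x i j s l m =
    piF x m * Riem h hinv x i j s l
      + phiF x m * KN (Ric h hinv) (Ric h hinv) x i j s l

/-- Super generalized recurrency condition at a point. -/
def SGK {k : ℕ} (h hinv : (Fin k → ℝ) → Fin k → Fin k → ℝ)
    (piF phiF psiF thetaF : (Fin k → ℝ) → Fin k → ℝ) (x : Fin k → ℝ) : Prop :=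
  ∀ i j s l m, cov4 h hinv (Riem h hinv) x i j s l m =
    piF x m * Riem h hinv x i j s l
      + phiF x m * KN (Ric h hinv) (Ric h hinv) x i j s l
      + psiF x m * KN h (Ric h hinv) x i j s l
      + thetaF x m * KN h h x i j s l

/-- Base-point projection of a point of `M = U × V`. -/
def bpt {p q : ℕ} (z : Fin (p + q) → ℝ) : Fin p → ℝ := fun a => z (Fin.castAdd q a)

/-- Fiber-point projection of a point of `M = U × V`. -/
def fpt {p q : ℕ} (z : Fin (p + q) → ℝ) : Fin q → ℝ := fun a => z (Fin.natAdd p a)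

/-- Block-diagonal combination of a base tensor `A` and a fiber tensor `B` scaled by `c`. -/
def wPair {p q : ℕ} (A : (Fin p → ℝ) → Fin p → Fin p → ℝ)
    (B : (Fin q → ℝ) → Fin q → Fin q → ℝ) (c : (Fin p → ℝ) → ℝ)
    (z : Fin (p + q) → ℝ) (i j : Fin (p + q)) : ℝ :=
  Sum.elim
    (fun a => Sum.elim (fun b => A (bpt z) a b) (fun _ => (0 : ℝ)) (finSumFinEquiv.symm j))
    (fun a => Sum.elim (fun _ => (0 : ℝ)) (fun b => c (bpt z) * B (fpt z) a b)
      (finSumFinEquiv.symm j))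
    (finSumFinEquiv.symm i)

/-- The warped product metric `g = ḡ ⊕ f g̃`. -/
def wMet {p q : ℕ} (gbar : (Fin p → ℝ) → Fin p → Fin p → ℝ)
    (gtil : (Fin q → ℝ) → Fin q → Fin q → ℝ) (f : (Fin p → ℝ) → ℝ) :
    (Fin (p + q) → ℝ) → Fin (p + q) → Fin (p + q) → ℝ :=
  wPair gbar gtil f

/-- The inverse of the warped product metric. -/
def wMetInv {p q : ℕ} (gbinv : (Fin p → ℝ) → Fin p → Fin p → ℝ)
    (gtinv : (Fin q → ℝ) → Fin q → Fin q → ℝ) (f : (Fin p → ℝ) → ℝ) :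
    (Fin (p + q) → ℝ) → Fin (p + q) → Fin (p + q) → ℝ :=
  wPair gbinv gtinv fun x => (f x)⁻¹

/-- The set of points of `M = U × V` inside `ℝ^{p+q}`. -/
def Mset {p q : ℕ} (U : Set (Fin p → ℝ)) (V : Set (Fin q → ℝ)) : Set (Fin (p + q) → ℝ) :=
  {z | bpt z ∈ U ∧ fpt z ∈ V}

/-- The tensor `T_{ab} = -(1/(2f))(f_{a,b} - (1/(2f)) f_a f_b)`. -/
def Tten {p : ℕ} (gbar gbinv : (Fin p → ℝ) → Fin p → Fin p → ℝ) (f : (Fin p → ℝ) → ℝ)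
    (x : Fin p → ℝ) (a b : Fin p) : ℝ :=
  -(1 / (2 * f x)) *
    ((pd (fun y => pd f a y) b x - ∑ c, Christoffel gbar gbinv c b a x * pd f c x)
      - (1 / (2 * f x)) * pd f a x * pd f b x)

/-- `tr T = ḡ^{ab} T_{ab}`. -/
def trT {p : ℕ} (gbar gbinv : (Fin p → ℝ) → Fin p → Fin p → ℝ) (f : (Fin p → ℝ) → ℝ)
    (x : Fin p → ℝ) : ℝ :=
  ∑ a, ∑ b, gbinv x a b * Tten gbar gbinv f x a b

/-- `P = (1/(4f²)) ḡ^{ab} f_a f_b`. -/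
def Pw {p : ℕ} (gbinv : (Fin p → ℝ) → Fin p → Fin p → ℝ) (f : (Fin p → ℝ) → ℝ)
    (x : Fin p → ℝ) : ℝ :=
  (1 / (4 * f x ^ 2)) * ∑ a, ∑ b, gbinv x a b * pd f a x * pd f b x

/-- `Q = f((n-p-1)P - tr T)`, with `n - p = q`. -/
def Qw {p : ℕ} (q : ℕ) (gbar gbinv : (Fin p → ℝ) → Fin p → Fin p → ℝ)
    (f : (Fin p → ℝ) → ℝ) (x : Fin p → ℝ) : ℝ :=
  f x * (((q : ℝ) - 1) * Pw gbinv f x - trT gbar gbinv f x)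


/-! ### Auxiliary lemmas -/

section Aux

variable {p q : ℕ}

lemma castAdd_ne_natAdd' (a : Fin p) (b : Fin q) : Fin.castAdd q a ≠ Fin.natAdd p b := by
  simp only [Fin.ne_iff_vne, Fin.coe_castAdd, Fin.coe_natAdd]
  omega

/-- base projection as a continuous linear map -/
def bptL (p q : ℕ) : ((Fin (p + q) → ℝ)) →L[ℝ] (Fin p → ℝ) :=
  ContinuousLinearMap.pi (fun a => ContinuousLinearMap.proj (Fin.castAdd q a))

def fptL (p q : ℕ) : ((Fin (p + q) → ℝ)) →L[ℝ] (Fin q → ℝ) :=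
  ContinuousLinearMap.pi (fun a => ContinuousLinearMap.proj (Fin.natAdd p a))

lemma bptL_apply (z : Fin (p + q) → ℝ) : bptL p q z = bpt z := rfl
lemma fptL_apply (z : Fin (p + q) → ℝ) : fptL p q z = fpt z := rfl

lemma diff_base_section (z : Fin (p + q) → ℝ) :
    DifferentiableAt ℝ (fun (y : Fin p → ℝ) => fun i => Sum.elim y (fpt z) (finSumFinEquiv.symm i)) (bpt z) := by
  rw [differentiableAt_pi]
  intro i
  rcases h : finSumFinEquiv.symm i with a | b
  · simp only [h, Sum.elim_inl]
    exact differentiableAt_pi.1 differentiableAt_fun_id a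
  · simp only [h, Sum.elim_inr]
    exact differentiableAt_const _

lemma diff_fiber_section (z : Fin (p + q) → ℝ) :
    DifferentiableAt ℝ (fun (y : Fin q → ℝ) => fun i => Sum.elim (bpt z) y (finSumFinEquiv.symm i)) (fpt z) := by
  rw [differentiableAt_pi]
  intro i
  rcases h : finSumFinEquiv.symm i with a | b
  · simp only [h, Sum.elim_inl]
    exact differentiableAt_const _
  · simp only [h, Sum.elim_inr]
    exact differentiableAt_pi.1 differentiableAt_fun_id b

lemma base_section_eval (z : Fin (p + q) → ℝ) :
    (fun i => Sum.elim (bpt z) (fpt z) (finSumFinEquiv.symm i)) = z := by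
  funext i
  rcases h : finSumFinEquiv.symm i with a | b
  · have hi : i = Fin.castAdd q a := by
      have := congrArg finSumFinEquiv h; simpa using this
    simp [h, hi, bpt]
  · have hi : i = Fin.natAdd p b := by
      have := congrArg finSumFinEquiv h; simpa using this
    simp [h, hi, fpt]

lemma bpt_section (z : Fin (p + q) → ℝ) (y : Fin p → ℝ) :
    bpt (fun i => Sum.elim y (fpt z) (finSumFinEquiv.symm i)) = y := by
  funext a; simp [bpt]

lemma fpt_section (z : Fin (p + q) → ℝ) (y : Fin q → ℝ) :
    fpt (fun i => Sum.elim (bpt z) y (finSumFinEquiv.symm i)) = y := by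
  funext a; simp [fpt]

lemma diffAt_comp_bpt_iff (G : (Fin p → ℝ) → ℝ) (z : Fin (p + q) → ℝ) :
    DifferentiableAt ℝ (fun y => G (bpt y)) z ↔ DifferentiableAt ℝ G (bpt z) := by
  constructor
  · intro h
    have h2 : DifferentiableAt ℝ ((fun y => G (bpt y)) ∘
        (fun (y : Fin p → ℝ) => fun i => Sum.elim y (fpt z) (finSumFinEquiv.symm i))) (bpt z) := by
      apply DifferentiableAt.comp
      · rw [base_section_eval]; exact h
      · exact diff_base_section z
    have he : ((fun y => G (bpt y)) ∘
        (fun (y : Fin p → ℝ) => fun i => Sum.elim y (fpt z) (finSumFinEquiv.symm i))) = G := by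
      funext y; simp [Function.comp, bpt_section]
    rwa [he] at h2
  · intro h
    exact DifferentiableAt.comp z h (bptL p q).differentiableAt

lemma diffAt_comp_fpt_iff (G : (Fin q → ℝ) → ℝ) (z : Fin (p + q) → ℝ) :
    DifferentiableAt ℝ (fun y => G (fpt y)) z ↔ DifferentiableAt ℝ G (fpt z) := by
  constructor
  · intro h
    have h2 : DifferentiableAt ℝ ((fun y => G (fpt y)) ∘
        (fun (y : Fin q → ℝ) => fun i => Sum.elim (bpt z) y (finSumFinEquiv.symm i))) (fpt z) := by
      apply DifferentiableAt.comp
      · rw [base_section_eval]; exact h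
      · exact diff_fiber_section z
    have he : ((fun y => G (fpt y)) ∘
        (fun (y : Fin q → ℝ) => fun i => Sum.elim (bpt z) y (finSumFinEquiv.symm i))) = G := by
      funext y; simp [Function.comp, fpt_section]
    rwa [he] at h2
  · intro h
    exact DifferentiableAt.comp z h (fptL p q).differentiableAt

lemma bptL_single_base (a : Fin p) :
    bpt (Pi.single (Fin.castAdd q a) (1 : ℝ)) = Pi.single a 1 := by
  funext b
  simp only [bpt]
  rcases eq_or_ne b a with h | h
  · subst h; simp
  · rw [Pi.single_eq_of_ne (by simpa using fun hh => h ((Fin.castAdd_injective p q) hh)) ,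
      Pi.single_eq_of_ne h]

lemma bptL_single_fiber (b : Fin q) :
    bpt (Pi.single (Fin.natAdd p b) (1 : ℝ)) = 0 := by
  funext a
  simp only [bpt]
  rw [Pi.single_eq_of_ne (castAdd_ne_natAdd' a b)]
  rfl

lemma fptL_single_fiber (b : Fin q) :
    fpt (Pi.single (Fin.natAdd p b) (1 : ℝ)) = Pi.single b 1 := by
  funext a
  simp only [fpt]
  rcases eq_or_ne a b with h | h
  · subst h; simp
  · rw [Pi.single_eq_of_ne (by simpa using fun hh => h (by simpa [Fin.ext_iff] using congrArg Fin.val hh : a = b)),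
      Pi.single_eq_of_ne h]

lemma fptL_single_base (a : Fin p) :
    fpt (Pi.single (Fin.castAdd q a) (1 : ℝ)) = 0 := by
  funext b
  simp only [fpt]
  rw [Pi.single_eq_of_ne (castAdd_ne_natAdd' a b).symm]
  rfl

/-- pd of a base-composed function along a base direction -/
lemma pd_bpt (G : (Fin p → ℝ) → ℝ) (a : Fin p) (z : Fin (p + q) → ℝ) :
    pd (fun y => G (bpt y)) (Fin.castAdd q a) z = pd G a (bpt z) := by
  by_cases h : DifferentiableAt ℝ G (bpt z)
  · unfold pd
    have : (fun y => G (bpt y)) = G ∘ (bptL p q) := rfl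
    rw [this, fderiv_comp (f := ⇑(bptL p q)) z h (bptL p q).differentiableAt,
      (bptL p q).fderiv]
    simp [bptL_single_base, bptL_apply]
  · unfold pd
    rw [fderiv_zero_of_not_differentiableAt h,
      fderiv_zero_of_not_differentiableAt (fun hh => h ((diffAt_comp_bpt_iff G z).1 hh))]
    simp

lemma pd_bpt_fiber (G : (Fin p → ℝ) → ℝ) (b : Fin q) (z : Fin (p + q) → ℝ) :
    pd (fun y => G (bpt y)) (Fin.natAdd p b) z = 0 := by
  by_cases h : DifferentiableAt ℝ G (bpt z)
  · unfold pd
    have : (fun y => G (bpt y)) = G ∘ (bptL p q) := rfl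
    rw [this, fderiv_comp (f := ⇑(bptL p q)) z h (bptL p q).differentiableAt,
      (bptL p q).fderiv]
    simp [bptL_single_fiber, bptL_apply]
  · unfold pd
    rw [fderiv_zero_of_not_differentiableAt (fun hh => h ((diffAt_comp_bpt_iff G z).1 hh))]
    simp

lemma pd_fpt (G : (Fin q → ℝ) → ℝ) (b : Fin q) (z : Fin (p + q) → ℝ) :
    pd (fun y => G (fpt y)) (Fin.natAdd p b) z = pd G b (fpt z) := by
  by_cases h : DifferentiableAt ℝ G (fpt z)
  · unfold pd
    have : (fun y => G (fpt y)) = G ∘ (fptL p q) := rfl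
    rw [this, fderiv_comp (f := ⇑(fptL p q)) z h (fptL p q).differentiableAt,
      (fptL p q).fderiv]
    simp [fptL_single_fiber, fptL_apply]
  · unfold pd
    rw [fderiv_zero_of_not_differentiableAt h,
      fderiv_zero_of_not_differentiableAt (fun hh => h ((diffAt_comp_fpt_iff G z).1 hh))]
    simp

lemma pd_fpt_base (G : (Fin q → ℝ) → ℝ) (a : Fin p) (z : Fin (p + q) → ℝ) :
    pd (fun y => G (fpt y)) (Fin.castAdd q a) z = 0 := by
  by_cases h : DifferentiableAt ℝ G (fpt z)
  · unfold pd
    have : (fun y => G (fpt y)) = G ∘ (fptL p q) := rfl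
    rw [this, fderiv_comp (f := ⇑(fptL p q)) z h (fptL p q).differentiableAt,
      (fptL p q).fderiv]
    simp [fptL_single_base, fptL_apply]
  · unfold pd
    rw [fderiv_zero_of_not_differentiableAt (fun hh => h ((diffAt_comp_fpt_iff G z).1 hh))]
    simp

lemma pd_zero_fun (F : (Fin (p + q) → ℝ) → ℝ) (h : ∀ y, F y = 0) (j : Fin (p + q)) (x) :
    pd F j x = 0 := by
  have : F = fun _ => (0 : ℝ) := funext h
  subst this
  simp [pd]

lemma pd_const (c : ℝ) {k : ℕ} (j : Fin k) (x) : pd (fun _ => c) j x = 0 := by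
  simp [pd]

end Aux

section Prod

variable {p q : ℕ} (gbar gbinv : (Fin p → ℝ) → Fin p → Fin p → ℝ)
  (gtil gtinv : (Fin q → ℝ) → Fin q → Fin q → ℝ)

local notation "GG" => wMet gbar gtil (fun _ => (1 : ℝ))
local notation "GGi" => wMetInv gbinv gtinv (fun _ => (1 : ℝ))

lemma met_bb (z) (a b : Fin p) : GG z (Fin.castAdd q a) (Fin.castAdd q b) = gbar (bpt z) a b := by
  simp [wMet, wPair]

lemma met_ff (z) (a b : Fin q) : GG z (Fin.natAdd p a) (Fin.natAdd p b) = gtil (fpt z) a b := by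
  simp [wMet, wPair]

lemma met_bf (z) (a : Fin p) (b : Fin q) : GG z (Fin.castAdd q a) (Fin.natAdd p b) = 0 := by
  simp [wMet, wPair]

lemma met_fb (z) (a : Fin q) (b : Fin p) : GG z (Fin.natAdd p a) (Fin.castAdd q b) = 0 := by
  simp [wMet, wPair]

lemma inv_bb (z) (a b : Fin p) : GGi z (Fin.castAdd q a) (Fin.castAdd q b) = gbinv (bpt z) a b := by
  simp [wMetInv, wPair]

lemma inv_ff (z) (a b : Fin q) : GGi z (Fin.natAdd p a) (Fin.natAdd p b) = gtinv (fpt z) a b := by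
  simp [wMetInv, wPair]

lemma inv_bf (z) (a : Fin p) (b : Fin q) : GGi z (Fin.castAdd q a) (Fin.natAdd p b) = 0 := by
  simp [wMetInv, wPair]

lemma inv_fb (z) (a : Fin q) (b : Fin p) : GGi z (Fin.natAdd p a) (Fin.castAdd q b) = 0 := by
  simp [wMetInv, wPair]

lemma pdm_bb_b (a b c : Fin p) (z) :
    pd (fun y => GG y (Fin.castAdd q a) (Fin.castAdd q b)) (Fin.castAdd q c) z
      = pd (fun x => gbar x a b) c (bpt z) := by
  rw [show (fun y => GG y (Fin.castAdd q a) (Fin.castAdd q b))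
      = fun y => gbar (bpt y) a b from funext fun y => met_bb gbar gtil y a b]
  exact pd_bpt (fun x => gbar x a b) c z

lemma pdm_bb_f (a b : Fin p) (γ : Fin q) (z) :
    pd (fun y => GG y (Fin.castAdd q a) (Fin.castAdd q b)) (Fin.natAdd p γ) z = 0 := by
  rw [show (fun y => GG y (Fin.castAdd q a) (Fin.castAdd q b))
      = fun y => gbar (bpt y) a b from funext fun y => met_bb gbar gtil y a b]
  exact pd_bpt_fiber (fun x => gbar x a b) γ z

lemma pdm_ff_f (a b c : Fin q) (z) :
    pd (fun y => GG y (Fin.natAdd p a) (Fin.natAdd p b)) (Fin.natAdd p c) z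
      = pd (fun x => gtil x a b) c (fpt z) := by
  rw [show (fun y => GG y (Fin.natAdd p a) (Fin.natAdd p b))
      = fun y => gtil (fpt y) a b from funext fun y => met_ff gbar gtil y a b]
  exact pd_fpt (fun x => gtil x a b) c z

lemma pdm_ff_b (a b : Fin q) (c : Fin p) (z) :
    pd (fun y => GG y (Fin.natAdd p a) (Fin.natAdd p b)) (Fin.castAdd q c) z = 0 := by
  rw [show (fun y => GG y (Fin.natAdd p a) (Fin.natAdd p b))
      = fun y => gtil (fpt y) a b from funext fun y => met_ff gbar gtil y a b]
  exact pd_fpt_base (fun x => gtil x a b) c z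

lemma pdm_bf (a : Fin p) (b : Fin q) (j : Fin (p + q)) (z) :
    pd (fun y => GG y (Fin.castAdd q a) (Fin.natAdd p b)) j z = 0 :=
  pd_zero_fun _ (fun y => met_bf gbar gtil y a b) j z

lemma pdm_fb (a : Fin q) (b : Fin p) (j : Fin (p + q)) (z) :
    pd (fun y => GG y (Fin.natAdd p a) (Fin.castAdd q b)) j z = 0 :=
  pd_zero_fun _ (fun y => met_fb gbar gtil y a b) j z

lemma chr_bbb (a b c : Fin p) (z) :
    Christoffel GG GGi (Fin.castAdd q a) (Fin.castAdd q b) (Fin.castAdd q c) z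
      = Christoffel gbar gbinv a b c (bpt z) := by
  unfold Christoffel
  rw [Fin.sum_univ_add]
  have h2 : ∀ ρ : Fin q, GGi z (Fin.castAdd q a) (Fin.natAdd p ρ) *
      (pd (fun y => GG y (Fin.natAdd p ρ) (Fin.castAdd q c)) (Fin.castAdd q b) z
        + pd (fun y => GG y (Fin.castAdd q b) (Fin.natAdd p ρ)) (Fin.castAdd q c) z
        - pd (fun y => GG y (Fin.castAdd q b) (Fin.castAdd q c)) (Fin.natAdd p ρ) z) = 0 := by
    intro ρ; rw [inv_bf]; ring
  rw [Finset.sum_congr rfl (fun ρ _ => h2 ρ), Finset.sum_const, smul_zero, add_zero]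
  congr 1
  apply Finset.sum_congr rfl
  intro d _
  rw [inv_bb, pdm_bb_b, pdm_bb_b, pdm_bb_b]

lemma chr_fff (a b c : Fin q) (z) :
    Christoffel GG GGi (Fin.natAdd p a) (Fin.natAdd p b) (Fin.natAdd p c) z
      = Christoffel gtil gtinv a b c (fpt z) := by
  unfold Christoffel
  rw [Fin.sum_univ_add]
  have h1 : ∀ d : Fin p, GGi z (Fin.natAdd p a) (Fin.castAdd q d) *
      (pd (fun y => GG y (Fin.castAdd q d) (Fin.natAdd p c)) (Fin.natAdd p b) z
        + pd (fun y => GG y (Fin.natAdd p b) (Fin.castAdd q d)) (Fin.natAdd p c) z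
        - pd (fun y => GG y (Fin.natAdd p b) (Fin.natAdd p c)) (Fin.castAdd q d) z) = 0 := by
    intro d; rw [inv_fb]; ring
  rw [Finset.sum_congr rfl (fun d _ => h1 d), Finset.sum_const, smul_zero, zero_add]
  congr 1
  apply Finset.sum_congr rfl
  intro ρ _
  rw [inv_ff, pdm_ff_f, pdm_ff_f, pdm_ff_f]

lemma chr_bbf (a b : Fin p) (γ : Fin q) (z) :
    Christoffel GG GGi (Fin.castAdd q a) (Fin.castAdd q b) (Fin.natAdd p γ) z = 0 := by
  unfold Christoffel
  rw [Fin.sum_univ_add]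
  have h1 : ∀ d : Fin p, GGi z (Fin.castAdd q a) (Fin.castAdd q d) *
      (pd (fun y => GG y (Fin.castAdd q d) (Fin.natAdd p γ)) (Fin.castAdd q b) z
        + pd (fun y => GG y (Fin.castAdd q b) (Fin.castAdd q d)) (Fin.natAdd p γ) z
        - pd (fun y => GG y (Fin.castAdd q b) (Fin.natAdd p γ)) (Fin.castAdd q d) z) = 0 := by
    intro d
    rw [pdm_bf, pdm_bb_f, pdm_bf]
    ring
  have h2 : ∀ ρ : Fin q, GGi z (Fin.castAdd q a) (Fin.natAdd p ρ) *
      (pd (fun y => GG y (Fin.natAdd p ρ) (Fin.natAdd p γ)) (Fin.castAdd q b) z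
        + pd (fun y => GG y (Fin.castAdd q b) (Fin.natAdd p ρ)) (Fin.natAdd p γ) z
        - pd (fun y => GG y (Fin.castAdd q b) (Fin.natAdd p γ)) (Fin.natAdd p ρ) z) = 0 := by
    intro ρ; rw [inv_bf]; ring
  rw [Finset.sum_congr rfl (fun d _ => h1 d), Finset.sum_congr rfl (fun ρ _ => h2 ρ)]
  simp

lemma chr_bfb (a : Fin p) (β : Fin q) (c : Fin p) (z) :
    Christoffel GG GGi (Fin.castAdd q a) (Fin.natAdd p β) (Fin.castAdd q c) z = 0 := by
  unfold Christoffel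
  rw [Fin.sum_univ_add]
  have h1 : ∀ d : Fin p, GGi z (Fin.castAdd q a) (Fin.castAdd q d) *
      (pd (fun y => GG y (Fin.castAdd q d) (Fin.castAdd q c)) (Fin.natAdd p β) z
        + pd (fun y => GG y (Fin.natAdd p β) (Fin.castAdd q d)) (Fin.castAdd q c) z
        - pd (fun y => GG y (Fin.natAdd p β) (Fin.castAdd q c)) (Fin.castAdd q d) z) = 0 := by
    intro d
    rw [pdm_bb_f, pdm_fb, pdm_fb]
    ring
  have h2 : ∀ ρ : Fin q, GGi z (Fin.castAdd q a) (Fin.natAdd p ρ) *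
      (pd (fun y => GG y (Fin.natAdd p ρ) (Fin.castAdd q c)) (Fin.natAdd p β) z
        + pd (fun y => GG y (Fin.natAdd p β) (Fin.natAdd p ρ)) (Fin.castAdd q c) z
        - pd (fun y => GG y (Fin.natAdd p β) (Fin.castAdd q c)) (Fin.natAdd p ρ) z) = 0 := by
    intro ρ; rw [inv_bf]; ring
  rw [Finset.sum_congr rfl (fun d _ => h1 d), Finset.sum_congr rfl (fun ρ _ => h2 ρ)]
  simp

lemma chr_bff (a : Fin p) (β γ : Fin q) (z) :
    Christoffel GG GGi (Fin.castAdd q a) (Fin.natAdd p β) (Fin.natAdd p γ) z = 0 := by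
  unfold Christoffel
  rw [Fin.sum_univ_add]
  have h1 : ∀ d : Fin p, GGi z (Fin.castAdd q a) (Fin.castAdd q d) *
      (pd (fun y => GG y (Fin.castAdd q d) (Fin.natAdd p γ)) (Fin.natAdd p β) z
        + pd (fun y => GG y (Fin.natAdd p β) (Fin.castAdd q d)) (Fin.natAdd p γ) z
        - pd (fun y => GG y (Fin.natAdd p β) (Fin.natAdd p γ)) (Fin.castAdd q d) z) = 0 := by
    intro d
    rw [pdm_bf, pdm_fb, pdm_ff_b]
    ring
  have h2 : ∀ ρ : Fin q, GGi z (Fin.castAdd q a) (Fin.natAdd p ρ) *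
      (pd (fun y => GG y (Fin.natAdd p ρ) (Fin.natAdd p γ)) (Fin.natAdd p β) z
        + pd (fun y => GG y (Fin.natAdd p β) (Fin.natAdd p ρ)) (Fin.natAdd p γ) z
        - pd (fun y => GG y (Fin.natAdd p β) (Fin.natAdd p γ)) (Fin.natAdd p ρ) z) = 0 := by
    intro ρ; rw [inv_bf]; ring
  rw [Finset.sum_congr rfl (fun d _ => h1 d), Finset.sum_congr rfl (fun ρ _ => h2 ρ)]
  simp

lemma chr_fbb (α : Fin q) (b c : Fin p) (z) :
    Christoffel GG GGi (Fin.natAdd p α) (Fin.castAdd q b) (Fin.castAdd q c) z = 0 := by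
  unfold Christoffel
  rw [Fin.sum_univ_add]
  have h1 : ∀ d : Fin p, GGi z (Fin.natAdd p α) (Fin.castAdd q d) *
      (pd (fun y => GG y (Fin.castAdd q d) (Fin.castAdd q c)) (Fin.castAdd q b) z
        + pd (fun y => GG y (Fin.castAdd q b) (Fin.castAdd q d)) (Fin.castAdd q c) z
        - pd (fun y => GG y (Fin.castAdd q b) (Fin.castAdd q c)) (Fin.castAdd q d) z) = 0 := by
    intro d; rw [inv_fb]; ring
  have h2 : ∀ ρ : Fin q, GGi z (Fin.natAdd p α) (Fin.natAdd p ρ) *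
      (pd (fun y => GG y (Fin.natAdd p ρ) (Fin.castAdd q c)) (Fin.castAdd q b) z
        + pd (fun y => GG y (Fin.castAdd q b) (Fin.natAdd p ρ)) (Fin.castAdd q c) z
        - pd (fun y => GG y (Fin.castAdd q b) (Fin.castAdd q c)) (Fin.natAdd p ρ) z) = 0 := by
    intro ρ
    rw [pdm_fb, pdm_bf, pdm_bb_f]
    ring
  rw [Finset.sum_congr rfl (fun d _ => h1 d), Finset.sum_congr rfl (fun ρ _ => h2 ρ)]
  simp

lemma chr_fbf (α : Fin q) (b : Fin p) (γ : Fin q) (z) :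
    Christoffel GG GGi (Fin.natAdd p α) (Fin.castAdd q b) (Fin.natAdd p γ) z = 0 := by
  unfold Christoffel
  rw [Fin.sum_univ_add]
  have h1 : ∀ d : Fin p, GGi z (Fin.natAdd p α) (Fin.castAdd q d) *
      (pd (fun y => GG y (Fin.castAdd q d) (Fin.natAdd p γ)) (Fin.castAdd q b) z
        + pd (fun y => GG y (Fin.castAdd q b) (Fin.castAdd q d)) (Fin.natAdd p γ) z
        - pd (fun y => GG y (Fin.castAdd q b) (Fin.natAdd p γ)) (Fin.castAdd q d) z) = 0 := by
    intro d; rw [inv_fb]; ring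
  have h2 : ∀ ρ : Fin q, GGi z (Fin.natAdd p α) (Fin.natAdd p ρ) *
      (pd (fun y => GG y (Fin.natAdd p ρ) (Fin.natAdd p γ)) (Fin.castAdd q b) z
        + pd (fun y => GG y (Fin.castAdd q b) (Fin.natAdd p ρ)) (Fin.natAdd p γ) z
        - pd (fun y => GG y (Fin.castAdd q b) (Fin.natAdd p γ)) (Fin.natAdd p ρ) z) = 0 := by
    intro ρ
    rw [pdm_ff_b, pdm_bf, pdm_bf]
    ring
  rw [Finset.sum_congr rfl (fun d _ => h1 d), Finset.sum_congr rfl (fun ρ _ => h2 ρ)]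
  simp

lemma chr_ffb (α β : Fin q) (c : Fin p) (z) :
    Christoffel GG GGi (Fin.natAdd p α) (Fin.natAdd p β) (Fin.castAdd q c) z = 0 := by
  unfold Christoffel
  rw [Fin.sum_univ_add]
  have h1 : ∀ d : Fin p, GGi z (Fin.natAdd p α) (Fin.castAdd q d) *
      (pd (fun y => GG y (Fin.castAdd q d) (Fin.castAdd q c)) (Fin.natAdd p β) z
        + pd (fun y => GG y (Fin.natAdd p β) (Fin.castAdd q d)) (Fin.castAdd q c) z
        - pd (fun y => GG y (Fin.natAdd p β) (Fin.castAdd q c)) (Fin.castAdd q d) z) = 0 := by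
    intro d; rw [inv_fb]; ring
  have h2 : ∀ ρ : Fin q, GGi z (Fin.natAdd p α) (Fin.natAdd p ρ) *
      (pd (fun y => GG y (Fin.natAdd p ρ) (Fin.castAdd q c)) (Fin.natAdd p β) z
        + pd (fun y => GG y (Fin.natAdd p β) (Fin.natAdd p ρ)) (Fin.castAdd q c) z
        - pd (fun y => GG y (Fin.natAdd p β) (Fin.castAdd q c)) (Fin.natAdd p ρ) z) = 0 := by
    intro ρ
    rw [pdm_fb, pdm_ff_b, pdm_fb]
    ring
  rw [Finset.sum_congr rfl (fun d _ => h1 d), Finset.sum_congr rfl (fun ρ _ => h2 ρ)]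
  simp

end Prod

section Prod2

variable {p q : ℕ} (gbar gbinv : (Fin p → ℝ) → Fin p → Fin p → ℝ)
  (gtil gtinv : (Fin q → ℝ) → Fin q → Fin q → ℝ)

local notation "GG" => wMet gbar gtil (fun _ => (1 : ℝ))
local notation "GGi" => wMetInv gbinv gtinv (fun _ => (1 : ℝ))

lemma pdc_bbb_b (a b c e : Fin p) (z) :
    pd (Christoffel GG GGi (Fin.castAdd q a) (Fin.castAdd q b) (Fin.castAdd q c)) (Fin.castAdd q e) z
      = pd (Christoffel gbar gbinv a b c) e (bpt z) := by
  rw [show Christoffel GG GGi (Fin.castAdd q a) (Fin.castAdd q b) (Fin.castAdd q c)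
      = fun y => Christoffel gbar gbinv a b c (bpt y) from
    funext fun y => chr_bbb gbar gbinv gtil gtinv a b c y]
  exact pd_bpt (Christoffel gbar gbinv a b c) e z

lemma pdc_bbb_f (a b c : Fin p) (ε : Fin q) (z) :
    pd (Christoffel GG GGi (Fin.castAdd q a) (Fin.castAdd q b) (Fin.castAdd q c)) (Fin.natAdd p ε) z
      = 0 := by
  rw [show Christoffel GG GGi (Fin.castAdd q a) (Fin.castAdd q b) (Fin.castAdd q c)
      = fun y => Christoffel gbar gbinv a b c (bpt y) from
    funext fun y => chr_bbb gbar gbinv gtil gtinv a b c y]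
  exact pd_bpt_fiber (Christoffel gbar gbinv a b c) ε z

lemma pdc_fff_f (a b c : Fin q) (ε : Fin q) (z) :
    pd (Christoffel GG GGi (Fin.natAdd p a) (Fin.natAdd p b) (Fin.natAdd p c)) (Fin.natAdd p ε) z
      = pd (Christoffel gtil gtinv a b c) ε (fpt z) := by
  rw [show Christoffel GG GGi (Fin.natAdd p a) (Fin.natAdd p b) (Fin.natAdd p c)
      = fun y => Christoffel gtil gtinv a b c (fpt y) from
    funext fun y => chr_fff gbar gbinv gtil gtinv a b c y]
  exact pd_fpt (Christoffel gtil gtinv a b c) ε z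

lemma pdc_fff_b (a b c : Fin q) (e : Fin p) (z) :
    pd (Christoffel GG GGi (Fin.natAdd p a) (Fin.natAdd p b) (Fin.natAdd p c)) (Fin.castAdd q e) z
      = 0 := by
  rw [show Christoffel GG GGi (Fin.natAdd p a) (Fin.natAdd p b) (Fin.natAdd p c)
      = fun y => Christoffel gtil gtinv a b c (fpt y) from
    funext fun y => chr_fff gbar gbinv gtil gtinv a b c y]
  exact pd_fpt_base (Christoffel gtil gtinv a b c) e z

lemma pdc_bbf (a b : Fin p) (γ : Fin q) (j) (z) :
    pd (Christoffel GG GGi (Fin.castAdd q a) (Fin.castAdd q b) (Fin.natAdd p γ)) j z = 0 :=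
  pd_zero_fun _ (fun y => chr_bbf gbar gbinv gtil gtinv a b γ y) j z

lemma pdc_bfb (a : Fin p) (β : Fin q) (c : Fin p) (j) (z) :
    pd (Christoffel GG GGi (Fin.castAdd q a) (Fin.natAdd p β) (Fin.castAdd q c)) j z = 0 :=
  pd_zero_fun _ (fun y => chr_bfb gbar gbinv gtil gtinv a β c y) j z

lemma pdc_bff (a : Fin p) (β γ : Fin q) (j) (z) :
    pd (Christoffel GG GGi (Fin.castAdd q a) (Fin.natAdd p β) (Fin.natAdd p γ)) j z = 0 :=
  pd_zero_fun _ (fun y => chr_bff gbar gbinv gtil gtinv a β γ y) j z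

lemma pdc_fbb (α : Fin q) (b c : Fin p) (j) (z) :
    pd (Christoffel GG GGi (Fin.natAdd p α) (Fin.castAdd q b) (Fin.castAdd q c)) j z = 0 :=
  pd_zero_fun _ (fun y => chr_fbb gbar gbinv gtil gtinv α b c y) j z

lemma pdc_fbf (α : Fin q) (b : Fin p) (γ : Fin q) (j) (z) :
    pd (Christoffel GG GGi (Fin.natAdd p α) (Fin.castAdd q b) (Fin.natAdd p γ)) j z = 0 :=
  pd_zero_fun _ (fun y => chr_fbf gbar gbinv gtil gtinv α b γ y) j z

lemma pdc_ffb (α β : Fin q) (c : Fin p) (j) (z) :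
    pd (Christoffel GG GGi (Fin.natAdd p α) (Fin.natAdd p β) (Fin.castAdd q c)) j z = 0 :=
  pd_zero_fun _ (fun y => chr_ffb gbar gbinv gtil gtinv α β c y) j z

end Prod2

section Prod3

variable {p q : ℕ} (gbar gbinv : (Fin p → ℝ) → Fin p → Fin p → ℝ)
  (gtil gtinv : (Fin q → ℝ) → Fin q → Fin q → ℝ)

local notation "GG" => wMet gbar gtil (fun _ => (1 : ℝ))
local notation "GGi" => wMetInv gbinv gtinv (fun _ => (1 : ℝ))

lemma riem_bbbb (z) (a b c d : Fin p) :
    Riem GG GGi z (Fin.castAdd q a) (Fin.castAdd q b) (Fin.castAdd q c) (Fin.castAdd q d)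
      = Riem gbar gbinv (bpt z) a b c d := by
  unfold Riem
  simp only [Fin.sum_univ_add, met_bb, met_bf, met_fb, met_ff,
    chr_bbb, chr_fff, chr_bbf, chr_bfb, chr_bff, chr_fbb, chr_fbf, chr_ffb,
    pdc_bbb_b, pdc_bbb_f, pdc_fff_f, pdc_fff_b, pdc_bbf, pdc_bfb, pdc_bff,
    pdc_fbb, pdc_fbf, pdc_ffb,
    mul_zero, zero_mul, add_zero, zero_add, sub_zero, zero_sub, neg_zero,
    Finset.sum_const_zero, sub_self]

lemma riem_ffff (z) (a b c d : Fin q) :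
    Riem GG GGi z (Fin.natAdd p a) (Fin.natAdd p b) (Fin.natAdd p c) (Fin.natAdd p d) = Riem gtil gtinv (fpt z) a b c d := by
  unfold Riem
  simp only [Fin.sum_univ_add, met_bb, met_bf, met_fb, met_ff,
    chr_bbb, chr_fff, chr_bbf, chr_bfb, chr_bff, chr_fbb, chr_fbf, chr_ffb,
    pdc_bbb_b, pdc_bbb_f, pdc_fff_f, pdc_fff_b, pdc_bbf, pdc_bfb, pdc_bff,
    pdc_fbb, pdc_fbf, pdc_ffb,
    mul_zero, zero_mul, add_zero, zero_add, sub_zero, zero_sub, neg_zero,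
    Finset.sum_const_zero, sub_self]

lemma riem_bffb (z) (a : Fin p) (β γ : Fin q) (b : Fin p) :
    Riem GG GGi z (Fin.castAdd q a) (Fin.natAdd p β) (Fin.natAdd p γ) (Fin.castAdd q b) = 0 := by
  unfold Riem
  simp only [Fin.sum_univ_add, met_bb, met_bf, met_fb, met_ff,
    chr_bbb, chr_fff, chr_bbf, chr_bfb, chr_bff, chr_fbb, chr_fbf, chr_ffb,
    pdc_bbb_b, pdc_bbb_f, pdc_fff_f, pdc_fff_b, pdc_bbf, pdc_bfb, pdc_bff,
    pdc_fbb, pdc_fbf, pdc_ffb,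
    mul_zero, zero_mul, add_zero, zero_add, sub_zero, zero_sub, neg_zero,
    Finset.sum_const_zero, sub_self]

lemma riem_bfbf (z) (a : Fin p) (β : Fin q) (c : Fin p) (γ : Fin q) :
    Riem GG GGi z (Fin.castAdd q a) (Fin.natAdd p β) (Fin.castAdd q c) (Fin.natAdd p γ) = 0 := by
  unfold Riem
  simp only [Fin.sum_univ_add, met_bb, met_bf, met_fb, met_ff,
    chr_bbb, chr_fff, chr_bbf, chr_bfb, chr_bff, chr_fbb, chr_fbf, chr_ffb,
    pdc_bbb_b, pdc_bbb_f, pdc_fff_f, pdc_fff_b, pdc_bbf, pdc_bfb, pdc_bff,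
    pdc_fbb, pdc_fbf, pdc_ffb,
    mul_zero, zero_mul, add_zero, zero_add, sub_zero, zero_sub, neg_zero,
    Finset.sum_const_zero, sub_self]

lemma riem_fbfb (z) (α : Fin q) (b : Fin p) (γ : Fin q) (d : Fin p) :
    Riem GG GGi z (Fin.natAdd p α) (Fin.castAdd q b) (Fin.natAdd p γ) (Fin.castAdd q d) = 0 := by
  unfold Riem
  simp only [Fin.sum_univ_add, met_bb, met_bf, met_fb, met_ff,
    chr_bbb, chr_fff, chr_bbf, chr_bfb, chr_bff, chr_fbb, chr_fbf, chr_ffb,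
    pdc_bbb_b, pdc_bbb_f, pdc_fff_f, pdc_fff_b, pdc_bbf, pdc_bfb, pdc_bff,
    pdc_fbb, pdc_fbf, pdc_ffb,
    mul_zero, zero_mul, add_zero, zero_add, sub_zero, zero_sub, neg_zero,
    Finset.sum_const_zero, sub_self]

lemma riem_bbbf (z) (a b c : Fin p) (δ : Fin q) :
    Riem GG GGi z (Fin.castAdd q a) (Fin.castAdd q b) (Fin.castAdd q c) (Fin.natAdd p δ) = 0 := by
  unfold Riem
  simp only [Fin.sum_univ_add, met_bb, met_bf, met_fb, met_ff,
    chr_bbb, chr_fff, chr_bbf, chr_bfb, chr_bff, chr_fbb, chr_fbf, chr_ffb,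
    pdc_bbb_b, pdc_bbb_f, pdc_fff_f, pdc_fff_b, pdc_bbf, pdc_bfb, pdc_bff,
    pdc_fbb, pdc_fbf, pdc_ffb,
    mul_zero, zero_mul, add_zero, zero_add, sub_zero, zero_sub, neg_zero,
    Finset.sum_const_zero, sub_self]

lemma riem_bfbb (z) (a : Fin p) (β : Fin q) (c d : Fin p) :
    Riem GG GGi z (Fin.castAdd q a) (Fin.natAdd p β) (Fin.castAdd q c) (Fin.castAdd q d) = 0 := by
  unfold Riem
  simp only [Fin.sum_univ_add, met_bb, met_bf, met_fb, met_ff,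
    chr_bbb, chr_fff, chr_bbf, chr_bfb, chr_bff, chr_fbb, chr_fbf, chr_ffb,
    pdc_bbb_b, pdc_bbb_f, pdc_fff_f, pdc_fff_b, pdc_bbf, pdc_bfb, pdc_bff,
    pdc_fbb, pdc_fbf, pdc_ffb,
    mul_zero, zero_mul, add_zero, zero_add, sub_zero, zero_sub, neg_zero,
    Finset.sum_const_zero, sub_self]

lemma riem_fbff (z) (ρ : Fin q) (b : Fin p) (σ δ : Fin q) :
    Riem GG GGi z (Fin.natAdd p ρ) (Fin.castAdd q b) (Fin.natAdd p σ) (Fin.natAdd p δ) = 0 := by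
  unfold Riem
  simp only [Fin.sum_univ_add, met_bb, met_bf, met_fb, met_ff,
    chr_bbb, chr_fff, chr_bbf, chr_bfb, chr_bff, chr_fbb, chr_fbf, chr_ffb,
    pdc_bbb_b, pdc_bbb_f, pdc_fff_f, pdc_fff_b, pdc_bbf, pdc_bfb, pdc_bff,
    pdc_fbb, pdc_fbf, pdc_ffb,
    mul_zero, zero_mul, add_zero, zero_add, sub_zero, zero_sub, neg_zero,
    Finset.sum_const_zero, sub_self]

lemma riem_fffb (z) (ρ σ π : Fin q) (b : Fin p) :
    Riem GG GGi z (Fin.natAdd p ρ) (Fin.natAdd p σ) (Fin.natAdd p π) (Fin.castAdd q b) = 0 := by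
  unfold Riem
  simp only [Fin.sum_univ_add, met_bb, met_bf, met_fb, met_ff,
    chr_bbb, chr_fff, chr_bbf, chr_bfb, chr_bff, chr_fbb, chr_fbf, chr_ffb,
    pdc_bbb_b, pdc_bbb_f, pdc_fff_f, pdc_fff_b, pdc_bbf, pdc_bfb, pdc_bff,
    pdc_fbb, pdc_fbf, pdc_ffb,
    mul_zero, zero_mul, add_zero, zero_add, sub_zero, zero_sub, neg_zero,
    Finset.sum_const_zero, sub_self]

end Prod3

section Prod4

variable {p q : ℕ} (gbar gbinv : (Fin p → ℝ) → Fin p → Fin p → ℝ)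
  (gtil gtinv : (Fin q → ℝ) → Fin q → Fin q → ℝ)

local notation "GG" => wMet gbar gtil (fun _ => (1 : ℝ))
local notation "GGi" => wMetInv gbinv gtinv (fun _ => (1 : ℝ))

lemma ric_bb (z) (a b : Fin p) :
    Ric GG GGi z (Fin.castAdd q a) (Fin.castAdd q b) = Ric gbar gbinv (bpt z) a b := by
  unfold Ric
  simp only [Fin.sum_univ_add, inv_bb, inv_bf, inv_fb, inv_ff,
    riem_bbbb, riem_ffff, riem_bffb, riem_bfbf, riem_fbfb, riem_bbbf, riem_bfbb,
    riem_fbff, riem_fffb,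
    mul_zero, zero_mul, add_zero, zero_add, Finset.sum_const_zero]

lemma ric_ff (z) (a b : Fin q) :
    Ric GG GGi z (Fin.natAdd p a) (Fin.natAdd p b) = Ric gtil gtinv (fpt z) a b := by
  unfold Ric
  simp only [Fin.sum_univ_add, inv_bb, inv_bf, inv_fb, inv_ff,
    riem_bbbb, riem_ffff, riem_bffb, riem_bfbf, riem_fbfb, riem_bbbf, riem_bfbb,
    riem_fbff, riem_fffb,
    mul_zero, zero_mul, add_zero, zero_add, Finset.sum_const_zero]

lemma ric_bf (z) (a : Fin p) (γ : Fin q) :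
    Ric GG GGi z (Fin.castAdd q a) (Fin.natAdd p γ) = 0 := by
  unfold Ric
  simp only [Fin.sum_univ_add, inv_bb, inv_bf, inv_fb, inv_ff,
    riem_bbbb, riem_ffff, riem_bffb, riem_bfbf, riem_fbfb, riem_bbbf, riem_bfbb,
    riem_fbff, riem_fffb,
    mul_zero, zero_mul, add_zero, zero_add, Finset.sum_const_zero]

lemma ric_fb (z) (β : Fin q) (b : Fin p) :
    Ric GG GGi z (Fin.natAdd p β) (Fin.castAdd q b) = 0 := by
  unfold Ric
  simp only [Fin.sum_univ_add, inv_bb, inv_bf, inv_fb, inv_ff,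
    riem_bbbb, riem_ffff, riem_bffb, riem_bfbf, riem_fbfb, riem_bbbf, riem_bfbb,
    riem_fbff, riem_fffb,
    mul_zero, zero_mul, add_zero, zero_add, Finset.sum_const_zero]

lemma pdr_bbbb_b (a b c d e : Fin p) (z) :
    pd (fun y => Riem GG GGi y (Fin.castAdd q a) (Fin.castAdd q b) (Fin.castAdd q c) (Fin.castAdd q d))
      (Fin.castAdd q e) z = pd (fun x => Riem gbar gbinv x a b c d) e (bpt z) := by
  rw [show (fun y => Riem GG GGi y (Fin.castAdd q a) (Fin.castAdd q b) (Fin.castAdd q c) (Fin.castAdd q d))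
      = fun y => Riem gbar gbinv (bpt y) a b c d from
    funext fun y => riem_bbbb gbar gbinv gtil gtinv y a b c d]
  exact pd_bpt (fun x => Riem gbar gbinv x a b c d) e z

lemma pdr_bbbb_f (a b c d : Fin p) (ε : Fin q) (z) :
    pd (fun y => Riem GG GGi y (Fin.castAdd q a) (Fin.castAdd q b) (Fin.castAdd q c) (Fin.castAdd q d))
      (Fin.natAdd p ε) z = 0 := by
  rw [show (fun y => Riem GG GGi y (Fin.castAdd q a) (Fin.castAdd q b) (Fin.castAdd q c) (Fin.castAdd q d))
      = fun y => Riem gbar gbinv (bpt y) a b c d from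
    funext fun y => riem_bbbb gbar gbinv gtil gtinv y a b c d]
  exact pd_bpt_fiber (fun x => Riem gbar gbinv x a b c d) ε z

lemma pdr_ffff_f (a b c d : Fin q) (ε : Fin q) (z) :
    pd (fun y => Riem GG GGi y (Fin.natAdd p a) (Fin.natAdd p b) (Fin.natAdd p c) (Fin.natAdd p d))
      (Fin.natAdd p ε) z = pd (fun x => Riem gtil gtinv x a b c d) ε (fpt z) := by
  rw [show (fun y => Riem GG GGi y (Fin.natAdd p a) (Fin.natAdd p b) (Fin.natAdd p c) (Fin.natAdd p d))
      = fun y => Riem gtil gtinv (fpt y) a b c d from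
    funext fun y => riem_ffff gbar gbinv gtil gtinv y a b c d]
  exact pd_fpt (fun x => Riem gtil gtinv x a b c d) ε z

lemma pdr_ffff_b (a b c d : Fin q) (e : Fin p) (z) :
    pd (fun y => Riem GG GGi y (Fin.natAdd p a) (Fin.natAdd p b) (Fin.natAdd p c) (Fin.natAdd p d))
      (Fin.castAdd q e) z = 0 := by
  rw [show (fun y => Riem GG GGi y (Fin.natAdd p a) (Fin.natAdd p b) (Fin.natAdd p c) (Fin.natAdd p d))
      = fun y => Riem gtil gtinv (fpt y) a b c d from
    funext fun y => riem_ffff gbar gbinv gtil gtinv y a b c d]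
  exact pd_fpt_base (fun x => Riem gtil gtinv x a b c d) e z

lemma pdr_bffb (a : Fin p) (β γ : Fin q) (b : Fin p) (j) (z) :
    pd (fun y => Riem GG GGi y (Fin.castAdd q a) (Fin.natAdd p β) (Fin.natAdd p γ) (Fin.castAdd q b))
      j z = 0 :=
  pd_zero_fun _ (fun y => riem_bffb gbar gbinv gtil gtinv y a β γ b) j z

lemma cov4_bbbb_b (z) (a b c d e : Fin p) :
    cov4 GG GGi (Riem GG GGi) z (Fin.castAdd q a) (Fin.castAdd q b) (Fin.castAdd q c)
      (Fin.castAdd q d) (Fin.castAdd q e)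
      = cov4 gbar gbinv (Riem gbar gbinv) (bpt z) a b c d e := by
  unfold cov4
  simp only [Fin.sum_univ_add, chr_bbb, chr_fff, chr_bbf, chr_bfb, chr_bff, chr_fbb,
    chr_fbf, chr_ffb, riem_bbbb, riem_ffff, riem_bffb, riem_bfbf, riem_fbfb, riem_bbbf,
    riem_bfbb, riem_fbff, riem_fffb, pdr_bbbb_b, pdr_bbbb_f, pdr_ffff_f, pdr_ffff_b, pdr_bffb,
    mul_zero, zero_mul, add_zero, zero_add, sub_zero, zero_sub, neg_zero,
    Finset.sum_const_zero, sub_self, pd_const]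
  rw [pd_bpt (fun x => Riem gbar gbinv x a b c d) e z]

lemma cov4_bbbb_f (z) (a b c d : Fin p) (ε : Fin q) :
    cov4 GG GGi (Riem GG GGi) z (Fin.castAdd q a) (Fin.castAdd q b) (Fin.castAdd q c)
      (Fin.castAdd q d) (Fin.natAdd p ε) = 0 := by
  unfold cov4
  simp only [Fin.sum_univ_add, chr_bbb, chr_fff, chr_bbf, chr_bfb, chr_bff, chr_fbb,
    chr_fbf, chr_ffb, riem_bbbb, riem_ffff, riem_bffb, riem_bfbf, riem_fbfb, riem_bbbf,
    riem_bfbb, riem_fbff, riem_fffb, pdr_bbbb_b, pdr_bbbb_f, pdr_ffff_f, pdr_ffff_b, pdr_bffb,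
    mul_zero, zero_mul, add_zero, zero_add, sub_zero, zero_sub, neg_zero,
    Finset.sum_const_zero, sub_self, pd_const]
  rw [pd_bpt_fiber (fun x => Riem gbar gbinv x a b c d) ε z]

lemma cov4_ffff_f (z) (a b c d ε : Fin q) :
    cov4 GG GGi (Riem GG GGi) z (Fin.natAdd p a) (Fin.natAdd p b) (Fin.natAdd p c)
      (Fin.natAdd p d) (Fin.natAdd p ε)
      = cov4 gtil gtinv (Riem gtil gtinv) (fpt z) a b c d ε := by
  unfold cov4
  simp only [Fin.sum_univ_add, chr_bbb, chr_fff, chr_bbf, chr_bfb, chr_bff, chr_fbb,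
    chr_fbf, chr_ffb, riem_bbbb, riem_ffff, riem_bffb, riem_bfbf, riem_fbfb, riem_bbbf,
    riem_bfbb, riem_fbff, riem_fffb, pdr_bbbb_b, pdr_bbbb_f, pdr_ffff_f, pdr_ffff_b, pdr_bffb,
    mul_zero, zero_mul, add_zero, zero_add, sub_zero, zero_sub, neg_zero,
    Finset.sum_const_zero, sub_self, pd_const]
  rw [pd_fpt (fun x => Riem gtil gtinv x a b c d) ε z]

lemma cov4_ffff_b (z) (a b c d : Fin q) (e : Fin p) :
    cov4 GG GGi (Riem GG GGi) z (Fin.natAdd p a) (Fin.natAdd p b) (Fin.natAdd p c)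
      (Fin.natAdd p d) (Fin.castAdd q e) = 0 := by
  unfold cov4
  simp only [Fin.sum_univ_add, chr_bbb, chr_fff, chr_bbf, chr_bfb, chr_bff, chr_fbb,
    chr_fbf, chr_ffb, riem_bbbb, riem_ffff, riem_bffb, riem_bfbf, riem_fbfb, riem_bbbf,
    riem_bfbb, riem_fbff, riem_fffb, pdr_bbbb_b, pdr_bbbb_f, pdr_ffff_f, pdr_ffff_b, pdr_bffb,
    mul_zero, zero_mul, add_zero, zero_add, sub_zero, zero_sub, neg_zero,
    Finset.sum_const_zero, sub_self, pd_const]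
  rw [pd_fpt_base (fun x => Riem gtil gtinv x a b c d) e z]

lemma cov4_mixed (z) (a : Fin p) (β γ : Fin q) (b : Fin p) (m : Fin (p + q)) :
    cov4 GG GGi (Riem GG GGi) z (Fin.castAdd q a) (Fin.natAdd p β) (Fin.natAdd p γ)
      (Fin.castAdd q b) m = 0 := by
  obtain ⟨m', rfl⟩ := finSumFinEquiv.surjective m
  rcases m' with e | ε <;>
  · simp only [finSumFinEquiv_apply_left, finSumFinEquiv_apply_right]
    unfold cov4
    simp only [Fin.sum_univ_add, chr_bbb, chr_fff, chr_bbf, chr_bfb, chr_bff, chr_fbb,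
      chr_fbf, chr_ffb, riem_bbbb, riem_ffff, riem_bffb, riem_bfbf, riem_fbfb, riem_bbbf,
      riem_bfbb, riem_fbff, riem_fffb, pdr_bbbb_b, pdr_bbbb_f, pdr_ffff_f, pdr_ffff_b, pdr_bffb,
      mul_zero, zero_mul, add_zero, zero_add, sub_zero, zero_sub, neg_zero,
      Finset.sum_const_zero, sub_self, pd_const]

end Prod4

section Prod5

variable {p q : ℕ} (gbar gbinv : (Fin p → ℝ) → Fin p → Fin p → ℝ)
  (gtil gtinv : (Fin q → ℝ) → Fin q → Fin q → ℝ)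

local notation "GG" => wMet gbar gtil (fun _ => (1 : ℝ))
local notation "GGi" => wMetInv gbinv gtinv (fun _ => (1 : ℝ))

lemma knrr_b (z) (a b c d : Fin p) :
    KN (Ric GG GGi) (Ric GG GGi) z (Fin.castAdd q a) (Fin.castAdd q b) (Fin.castAdd q c) (Fin.castAdd q d)
      = KN (Ric gbar gbinv) (Ric gbar gbinv) (bpt z) a b c d := by
  simp only [KN, met_bb, met_bf, met_fb, met_ff, ric_bb, ric_ff, ric_bf, ric_fb] <;> try ring

lemma knhr_b (z) (a b c d : Fin p) :
    KN GG (Ric GG GGi) z (Fin.castAdd q a) (Fin.castAdd q b) (Fin.castAdd q c) (Fin.castAdd q d)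
      = KN gbar (Ric gbar gbinv) (bpt z) a b c d := by
  simp only [KN, met_bb, met_bf, met_fb, met_ff, ric_bb, ric_ff, ric_bf, ric_fb] <;> try ring

lemma knhh_b (z) (a b c d : Fin p) :
    KN GG GG z (Fin.castAdd q a) (Fin.castAdd q b) (Fin.castAdd q c) (Fin.castAdd q d)
      = KN gbar gbar (bpt z) a b c d := by
  simp only [KN, met_bb, met_bf, met_fb, met_ff, ric_bb, ric_ff, ric_bf, ric_fb] <;> try ring

lemma knrr_f (z) (a b c d : Fin q) :
    KN (Ric GG GGi) (Ric GG GGi) z (Fin.natAdd p a) (Fin.natAdd p b) (Fin.natAdd p c) (Fin.natAdd p d)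
      = KN (Ric gtil gtinv) (Ric gtil gtinv) (fpt z) a b c d := by
  simp only [KN, met_bb, met_bf, met_fb, met_ff, ric_bb, ric_ff, ric_bf, ric_fb] <;> try ring

lemma knhr_f (z) (a b c d : Fin q) :
    KN GG (Ric GG GGi) z (Fin.natAdd p a) (Fin.natAdd p b) (Fin.natAdd p c) (Fin.natAdd p d)
      = KN gtil (Ric gtil gtinv) (fpt z) a b c d := by
  simp only [KN, met_bb, met_bf, met_fb, met_ff, ric_bb, ric_ff, ric_bf, ric_fb] <;> try ring

lemma knhh_f (z) (a b c d : Fin q) :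
    KN GG GG z (Fin.natAdd p a) (Fin.natAdd p b) (Fin.natAdd p c) (Fin.natAdd p d)
      = KN gtil gtil (fpt z) a b c d := by
  simp only [KN, met_bb, met_bf, met_fb, met_ff, ric_bb, ric_ff, ric_bf, ric_fb] <;> try ring

lemma knrr_m (z) (a : Fin p) (β γ : Fin q) (b : Fin p) :
    KN (Ric GG GGi) (Ric GG GGi) z (Fin.castAdd q a) (Fin.natAdd p β) (Fin.natAdd p γ) (Fin.castAdd q b)
      = 2 * (Ric gbar gbinv (bpt z) a b * Ric gtil gtinv (fpt z) β γ) := by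
  simp only [KN, met_bb, met_bf, met_fb, met_ff, ric_bb, ric_ff, ric_bf, ric_fb] <;> try ring

lemma knhr_m (z) (a : Fin p) (β γ : Fin q) (b : Fin p) :
    KN GG (Ric GG GGi) z (Fin.castAdd q a) (Fin.natAdd p β) (Fin.natAdd p γ) (Fin.castAdd q b)
      = gbar (bpt z) a b * Ric gtil gtinv (fpt z) β γ
        + Ric gbar gbinv (bpt z) a b * gtil (fpt z) β γ := by
  simp only [KN, met_bb, met_bf, met_fb, met_ff, ric_bb, ric_ff, ric_bf, ric_fb] <;> try ring

lemma knhh_m (z) (a : Fin p) (β γ : Fin q) (b : Fin p) :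
    KN GG GG z (Fin.castAdd q a) (Fin.natAdd p β) (Fin.natAdd p γ) (Fin.castAdd q b)
      = 2 * (gbar (bpt z) a b * gtil (fpt z) β γ) := by
  simp only [KN, met_bb, met_bf, met_fb, met_ff, ric_bb, ric_ff, ric_bf, ric_fb] <;> try ring

end Prod5
/-- Corollary 4.3: properties of the factors of a product super generalized
recurrent manifold. -/
theorem product_SGK_factors
    {p q : ℕ} (hp : 1 ≤ p) (hq : 1 ≤ q)
    (U : Set (Fin p → ℝ)) (V : Set (Fin q → ℝ))
    (hU : IsOpen U) (hV : IsOpen V)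
    (gbar gbinv : (Fin p → ℝ) → Fin p → Fin p → ℝ)
    (gtil gtinv : (Fin q → ℝ) → Fin q → Fin q → ℝ)
    (hgb : ∀ a b, ContDiffOn ℝ (⊤ : ℕ∞) (fun x => gbar x a b) U)
    (hgbs : ∀ x ∈ U, ∀ a b, gbar x a b = gbar x b a)
    (hgbi : ∀ x ∈ U, ∀ a b, (∑ c, gbar x a c * gbinv x c b) = if a = b then (1 : ℝ) else 0)
    (hgt : ∀ a b, ContDiffOn ℝ (⊤ : ℕ∞) (fun y => gtil y a b) V)
    (hgts : ∀ y ∈ V, ∀ a b, gtil y a b = gtil y b a)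
    (hgti : ∀ y ∈ V, ∀ a b, (∑ c, gtil y a c * gtinv y c b) = if a = b then (1 : ℝ) else 0)
    (piF phiF psiF thetaF : (Fin (p + q) → ℝ) → Fin (p + q) → ℝ)
    (hpiF : ∀ m, ContDiffOn ℝ (⊤ : ℕ∞) (fun z => piF z m) (Mset U V))
    (hphiF : ∀ m, ContDiffOn ℝ (⊤ : ℕ∞) (fun z => phiF z m) (Mset U V))
    (hpsiF : ∀ m, ContDiffOn ℝ (⊤ : ℕ∞) (fun z => psiF z m) (Mset U V))
    (hthetaF : ∀ m, ContDiffOn ℝ (⊤ : ℕ∞) (fun z => thetaF z m) (Mset U V))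
    (hsgk : ∀ z ∈ Mset U V, SGK (wMet gbar gtil (fun _ => (1 : ℝ))) (wMetInv gbinv gtinv (fun _ => (1 : ℝ))) piF phiF psiF thetaF z) :
    ((∃ piB phiB psiB thetaB : (Fin (p + q) → ℝ) → Fin p → ℝ,
        ∀ z ∈ Mset U V, ∀ a b c d e : Fin p,
          cov4 gbar gbinv (Riem gbar gbinv) (bpt z) a b c d e =
            piB z e * Riem gbar gbinv (bpt z) a b c d + phiB z e * KN (Ric gbar gbinv) (Ric gbar gbinv) (bpt z) a b c d
            + psiB z e * KN gbar (Ric gbar gbinv) (bpt z) a b c d + thetaB z e * KN gbar gbar (bpt z) a b c d)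
      ∧ (∃ piT phiT psiT thetaT : (Fin (p + q) → ℝ) → Fin q → ℝ,
          ∀ z ∈ Mset U V, ∀ α β γ δ ε : Fin q,
            cov4 gtil gtinv (Riem gtil gtinv) (fpt z) α β γ δ ε =
              piT z ε * Riem gtil gtinv (fpt z) α β γ δ + phiT z ε * KN (Ric gtil gtinv) (Ric gtil gtinv) (fpt z) α β γ δ
              + psiT z ε * KN gtil (Ric gtil gtinv) (fpt z) α β γ δ + thetaT z ε * KN gtil gtil (fpt z) α β γ δ))
    ∧ (∀ z ∈ Mset U V, (∃ ε : Fin q, piF z (Fin.natAdd p ε) ≠ 0) →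
        ∃ N₁ N₂ N₃ : ℝ, ∀ a b c d : Fin p,
          Riem gbar gbinv (bpt z) a b c d = N₁ * KN gbar gbar (bpt z) a b c d - N₂ * KN gbar (Ric gbar gbinv) (bpt z) a b c d - N₃ * KN (Ric gbar gbinv) (Ric gbar gbinv) (bpt z) a b c d)
    ∧ (∀ z ∈ Mset U V, (∃ e : Fin p, piF z (Fin.castAdd q e) ≠ 0) →
        ∃ N₁ N₂ N₃ : ℝ, ∀ α β γ δ : Fin q,
          Riem gtil gtinv (fpt z) α β γ δ = N₁ * KN gtil gtil (fpt z) α β γ δ - N₂ * KN gtil (Ric gtil gtinv) (fpt z) α β γ δ - N₃ * KN (Ric gtil gtinv) (Ric gtil gtinv) (fpt z) α β γ δ)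
    ∧ (∀ z ∈ Mset U V,
        (∃ ε : Fin q, 2 * Scal gtil gtinv (fpt z) * phiF z (Fin.natAdd p ε)
            + (q : ℝ) * psiF z (Fin.natAdd p ε) ≠ 0) →
        ∃ lam : ℝ, ∀ a b : Fin p, Ric gbar gbinv (bpt z) a b = lam * gbar (bpt z) a b)
    ∧ (∀ z ∈ Mset U V,
        (∃ e : Fin p, 2 * Scal gbar gbinv (bpt z) * phiF z (Fin.castAdd q e)
            + (p : ℝ) * psiF z (Fin.castAdd q e) ≠ 0) →
        ∃ mu : ℝ, ∀ α β : Fin q, Ric gtil gtinv (fpt z) α β = mu * gtil (fpt z) α β) := by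
  -- trace lemmas
  have traceF : ∀ y ∈ V, (∑ β : Fin q, ∑ γ : Fin q, gtinv y β γ * gtil y β γ) = (q : ℝ) := by
    intro y hy
    have h1 : ∀ γ : Fin q, (∑ β : Fin q, gtinv y β γ * gtil y β γ) = 1 := by
      intro γ
      have h2 : (∑ c : Fin q, gtil y γ c * gtinv y c γ) = 1 := by simpa using hgti y hy γ γ
      rw [← h2]
      apply Finset.sum_congr rfl
      intro β _
      rw [hgts y hy γ β]; ring
    rw [Finset.sum_comm]
    simp [h1]
  have traceB : ∀ x ∈ U, (∑ a : Fin p, ∑ b : Fin p, gbinv x a b * gbar x a b) = (p : ℝ) := by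
    intro x hx
    have h1 : ∀ b : Fin p, (∑ a : Fin p, gbinv x a b * gbar x a b) = 1 := by
      intro b
      have h2 : (∑ c : Fin p, gbar x b c * gbinv x c b) = 1 := by simpa using hgbi x hx b b
      rw [← h2]
      apply Finset.sum_congr rfl
      intro a _
      rw [hgbs x hx b a]; ring
    rw [Finset.sum_comm]
    simp [h1]
  -- the SGK identity specialized to all-base indices
  have IB : ∀ z ∈ Mset U V, ∀ (a b c d : Fin p) (e : Fin p),
      cov4 gbar gbinv (Riem gbar gbinv) (bpt z) a b c d e
        = piF z (Fin.castAdd q e) * Riem gbar gbinv (bpt z) a b c d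
          + phiF z (Fin.castAdd q e) * KN (Ric gbar gbinv) (Ric gbar gbinv) (bpt z) a b c d
          + psiF z (Fin.castAdd q e) * KN gbar (Ric gbar gbinv) (bpt z) a b c d
          + thetaF z (Fin.castAdd q e) * KN gbar gbar (bpt z) a b c d := by
    intro z hz a b c d e
    have h := hsgk z hz (Fin.castAdd q a) (Fin.castAdd q b) (Fin.castAdd q c)
      (Fin.castAdd q d) (Fin.castAdd q e)
    rwa [cov4_bbbb_b, riem_bbbb, knrr_b, knhr_b, knhh_b] at h
  have IB0 : ∀ z ∈ Mset U V, ∀ (a b c d : Fin p) (ε : Fin q),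
      0 = piF z (Fin.natAdd p ε) * Riem gbar gbinv (bpt z) a b c d
          + phiF z (Fin.natAdd p ε) * KN (Ric gbar gbinv) (Ric gbar gbinv) (bpt z) a b c d
          + psiF z (Fin.natAdd p ε) * KN gbar (Ric gbar gbinv) (bpt z) a b c d
          + thetaF z (Fin.natAdd p ε) * KN gbar gbar (bpt z) a b c d := by
    intro z hz a b c d ε
    have h := hsgk z hz (Fin.castAdd q a) (Fin.castAdd q b) (Fin.castAdd q c)
      (Fin.castAdd q d) (Fin.natAdd p ε)
    rwa [cov4_bbbb_f, riem_bbbb, knrr_b, knhr_b, knhh_b] at h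
  have IT : ∀ z ∈ Mset U V, ∀ (a b c d : Fin q) (ε : Fin q),
      cov4 gtil gtinv (Riem gtil gtinv) (fpt z) a b c d ε
        = piF z (Fin.natAdd p ε) * Riem gtil gtinv (fpt z) a b c d
          + phiF z (Fin.natAdd p ε) * KN (Ric gtil gtinv) (Ric gtil gtinv) (fpt z) a b c d
          + psiF z (Fin.natAdd p ε) * KN gtil (Ric gtil gtinv) (fpt z) a b c d
          + thetaF z (Fin.natAdd p ε) * KN gtil gtil (fpt z) a b c d := by
    intro z hz a b c d ε
    have h := hsgk z hz (Fin.natAdd p a) (Fin.natAdd p b) (Fin.natAdd p c)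
      (Fin.natAdd p d) (Fin.natAdd p ε)
    rwa [cov4_ffff_f, riem_ffff, knrr_f, knhr_f, knhh_f] at h
  have IT0 : ∀ z ∈ Mset U V, ∀ (a b c d : Fin q) (e : Fin p),
      0 = piF z (Fin.castAdd q e) * Riem gtil gtinv (fpt z) a b c d
          + phiF z (Fin.castAdd q e) * KN (Ric gtil gtinv) (Ric gtil gtinv) (fpt z) a b c d
          + psiF z (Fin.castAdd q e) * KN gtil (Ric gtil gtinv) (fpt z) a b c d
          + thetaF z (Fin.castAdd q e) * KN gtil gtil (fpt z) a b c d := by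
    intro z hz a b c d e
    have h := hsgk z hz (Fin.natAdd p a) (Fin.natAdd p b) (Fin.natAdd p c)
      (Fin.natAdd p d) (Fin.castAdd q e)
    rwa [cov4_ffff_b, riem_ffff, knrr_f, knhr_f, knhh_f] at h
  have IM : ∀ z ∈ Mset U V, ∀ (a b : Fin p) (β γ : Fin q) (m : Fin (p + q)),
      0 = phiF z m * (2 * (Ric gbar gbinv (bpt z) a b * Ric gtil gtinv (fpt z) β γ))
          + psiF z m * (gbar (bpt z) a b * Ric gtil gtinv (fpt z) β γ
              + Ric gbar gbinv (bpt z) a b * gtil (fpt z) β γ)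
          + thetaF z m * (2 * (gbar (bpt z) a b * gtil (fpt z) β γ)) := by
    intro z hz a b β γ m
    have h := hsgk z hz (Fin.castAdd q a) (Fin.natAdd p β) (Fin.natAdd p γ)
      (Fin.castAdd q b) m
    rw [cov4_mixed, riem_bffb, knrr_m, knhr_m, knhh_m, mul_zero, zero_add] at h
    exact h
  refine ⟨⟨⟨fun z e => piF z (Fin.castAdd q e), fun z e => phiF z (Fin.castAdd q e),
      fun z e => psiF z (Fin.castAdd q e), fun z e => thetaF z (Fin.castAdd q e),
      fun z hz a b c d e => IB z hz a b c d e⟩,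
    ⟨fun z ε => piF z (Fin.natAdd p ε), fun z ε => phiF z (Fin.natAdd p ε),
      fun z ε => psiF z (Fin.natAdd p ε), fun z ε => thetaF z (Fin.natAdd p ε),
      fun z hz a b c d ε => IT z hz a b c d ε⟩⟩, ?_, ?_, ?_, ?_⟩
  · -- (ii) Roter type for the base
    rintro z hz ⟨ε, hε⟩
    refine ⟨-(thetaF z (Fin.natAdd p ε)) / piF z (Fin.natAdd p ε),
      psiF z (Fin.natAdd p ε) / piF z (Fin.natAdd p ε),
      phiF z (Fin.natAdd p ε) / piF z (Fin.natAdd p ε), ?_⟩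
    intro a b c d
    have h := IB0 z hz a b c d ε
    rw [div_mul_eq_mul_div, div_mul_eq_mul_div, div_mul_eq_mul_div, div_sub_div_same,
      div_sub_div_same, eq_div_iff hε]
    linear_combination -h
  · -- (iii) Roter type for the fiber
    rintro z hz ⟨e, he⟩
    refine ⟨-(thetaF z (Fin.castAdd q e)) / piF z (Fin.castAdd q e),
      psiF z (Fin.castAdd q e) / piF z (Fin.castAdd q e),
      phiF z (Fin.castAdd q e) / piF z (Fin.castAdd q e), ?_⟩
    intro a b c d
    have h := IT0 z hz a b c d e
    rw [div_mul_eq_mul_div, div_mul_eq_mul_div, div_mul_eq_mul_div, div_sub_div_same,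
      div_sub_div_same, eq_div_iff he]
    linear_combination -h
  · -- (iv) base is Einstein
    rintro z hz ⟨ε, hD⟩
    set φ := phiF z (Fin.natAdd p ε) with hφ
    set ψ := psiF z (Fin.natAdd p ε) with hψ
    set θ := thetaF z (Fin.natAdd p ε) with hθ
    set κ := Scal gtil gtinv (fpt z) with hκ
    refine ⟨-(ψ * κ + 2 * θ * q) / (2 * κ * φ + (q : ℝ) * ψ), ?_⟩
    intro a b
    set Sb := Ric gbar gbinv (bpt z) a b with hSb
    set gb := gbar (bpt z) a b with hgb'
    have h0 : (∑ β : Fin q, ∑ γ : Fin q, gtinv (fpt z) β γ *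
        (φ * (2 * (Sb * Ric gtil gtinv (fpt z) β γ))
          + ψ * (gb * Ric gtil gtinv (fpt z) β γ + Sb * gtil (fpt z) β γ)
          + θ * (2 * (gb * gtil (fpt z) β γ)))) = 0 := by
      apply Finset.sum_eq_zero
      intro β _
      apply Finset.sum_eq_zero
      intro γ _
      rw [← IM z hz a b β γ (Fin.natAdd p ε), mul_zero]
    have h1 : (∑ β : Fin q, ∑ γ : Fin q, gtinv (fpt z) β γ *
        (φ * (2 * (Sb * Ric gtil gtinv (fpt z) β γ))
          + ψ * (gb * Ric gtil gtinv (fpt z) β γ + Sb * gtil (fpt z) β γ)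
          + θ * (2 * (gb * gtil (fpt z) β γ))))
        = (2 * φ * Sb + ψ * gb) * κ + (ψ * Sb + 2 * θ * gb) * (q : ℝ) := by
      have hrw : ∀ β γ : Fin q, gtinv (fpt z) β γ *
          (φ * (2 * (Sb * Ric gtil gtinv (fpt z) β γ))
            + ψ * (gb * Ric gtil gtinv (fpt z) β γ + Sb * gtil (fpt z) β γ)
            + θ * (2 * (gb * gtil (fpt z) β γ)))
          = (2 * φ * Sb + ψ * gb) * (gtinv (fpt z) β γ * Ric gtil gtinv (fpt z) β γ)
            + (ψ * Sb + 2 * θ * gb) * (gtinv (fpt z) β γ * gtil (fpt z) β γ) := by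
        intro β γ; ring
      calc (∑ β : Fin q, ∑ γ : Fin q, gtinv (fpt z) β γ *
          (φ * (2 * (Sb * Ric gtil gtinv (fpt z) β γ))
            + ψ * (gb * Ric gtil gtinv (fpt z) β γ + Sb * gtil (fpt z) β γ)
            + θ * (2 * (gb * gtil (fpt z) β γ))))
          = (∑ β : Fin q, ∑ γ : Fin q,
              ((2 * φ * Sb + ψ * gb) * (gtinv (fpt z) β γ * Ric gtil gtinv (fpt z) β γ)
              + (ψ * Sb + 2 * θ * gb) * (gtinv (fpt z) β γ * gtil (fpt z) β γ))) := by
            exact Finset.sum_congr rfl fun β _ => Finset.sum_congr rfl fun γ _ => hrw β γ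
        _ = (2 * φ * Sb + ψ * gb) *
              (∑ β : Fin q, ∑ γ : Fin q, gtinv (fpt z) β γ * Ric gtil gtinv (fpt z) β γ)
            + (ψ * Sb + 2 * θ * gb) *
              (∑ β : Fin q, ∑ γ : Fin q, gtinv (fpt z) β γ * gtil (fpt z) β γ) := by
            simp only [Finset.sum_add_distrib, ← Finset.mul_sum]
        _ = (2 * φ * Sb + ψ * gb) * κ + (ψ * Sb + 2 * θ * gb) * (q : ℝ) := by
            rw [traceF (fpt z) hz.2]; rfl
    have hE : (2 * φ * Sb + ψ * gb) * κ + (ψ * Sb + 2 * θ * gb) * (q : ℝ) = 0 := by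
      rw [← h1]; exact h0
    rw [div_mul_eq_mul_div, eq_div_iff hD]
    linarith [hE]
  · -- (v) fiber is Einstein
    rintro z hz ⟨e, hD⟩
    set φ := phiF z (Fin.castAdd q e) with hφ
    set ψ := psiF z (Fin.castAdd q e) with hψ
    set θ := thetaF z (Fin.castAdd q e) with hθ
    set κ := Scal gbar gbinv (bpt z) with hκ
    refine ⟨-(ψ * κ + 2 * θ * p) / (2 * κ * φ + (p : ℝ) * ψ), ?_⟩
    intro β γ
    set St := Ric gtil gtinv (fpt z) β γ with hSt
    set gt := gtil (fpt z) β γ with hgt'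
    have h0 : (∑ a : Fin p, ∑ b : Fin p, gbinv (bpt z) a b *
        (φ * (2 * (Ric gbar gbinv (bpt z) a b * St))
          + ψ * (gbar (bpt z) a b * St + Ric gbar gbinv (bpt z) a b * gt)
          + θ * (2 * (gbar (bpt z) a b * gt)))) = 0 := by
      apply Finset.sum_eq_zero
      intro a _
      apply Finset.sum_eq_zero
      intro b _
      rw [← IM z hz a b β γ (Fin.castAdd q e), mul_zero]
    have h1 : (∑ a : Fin p, ∑ b : Fin p, gbinv (bpt z) a b *
        (φ * (2 * (Ric gbar gbinv (bpt z) a b * St))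
          + ψ * (gbar (bpt z) a b * St + Ric gbar gbinv (bpt z) a b * gt)
          + θ * (2 * (gbar (bpt z) a b * gt))))
        = (2 * φ * St + ψ * gt) * κ + (ψ * St + 2 * θ * gt) * (p : ℝ) := by
      have hrw : ∀ a b : Fin p, gbinv (bpt z) a b *
          (φ * (2 * (Ric gbar gbinv (bpt z) a b * St))
            + ψ * (gbar (bpt z) a b * St + Ric gbar gbinv (bpt z) a b * gt)
            + θ * (2 * (gbar (bpt z) a b * gt)))
          = (2 * φ * St + ψ * gt) * (gbinv (bpt z) a b * Ric gbar gbinv (bpt z) a b)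
            + (ψ * St + 2 * θ * gt) * (gbinv (bpt z) a b * gbar (bpt z) a b) := by
        intro a b; ring
      calc (∑ a : Fin p, ∑ b : Fin p, gbinv (bpt z) a b *
          (φ * (2 * (Ric gbar gbinv (bpt z) a b * St))
            + ψ * (gbar (bpt z) a b * St + Ric gbar gbinv (bpt z) a b * gt)
            + θ * (2 * (gbar (bpt z) a b * gt))))
          = (∑ a : Fin p, ∑ b : Fin p,
              ((2 * φ * St + ψ * gt) * (gbinv (bpt z) a b * Ric gbar gbinv (bpt z) a b)
              + (ψ * St + 2 * θ * gt) * (gbinv (bpt z) a b * gbar (bpt z) a b))) := by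
            exact Finset.sum_congr rfl fun a _ => Finset.sum_congr rfl fun b _ => hrw a b
        _ = (2 * φ * St + ψ * gt) *
              (∑ a : Fin p, ∑ b : Fin p, gbinv (bpt z) a b * Ric gbar gbinv (bpt z) a b)
            + (ψ * St + 2 * θ * gt) *
              (∑ a : Fin p, ∑ b : Fin p, gbinv (bpt z) a b * gbar (bpt z) a b) := by
            simp only [Finset.sum_add_distrib, ← Finset.mul_sum]
        _ = (2 * φ * St + ψ * gt) * κ + (ψ * St + 2 * θ * gt) * (p : ℝ) := by
            rw [traceB (bpt z) hz.1]; rfl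
    have hE : (2 * φ * St + ψ * gt) * κ + (ψ * St + 2 * θ * gt) * (p : ℝ) = 0 := by
      rw [← h1]; exact h0
    rw [div_mul_eq_mul_div, eq_div_iff hD]
    linarith [hE]
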